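/- The canonical disjunctive database representing the cardinality-based repairs of the family D_n has size exactly 2n + n·2^n: it contains n disjunctions of 2 facts and 2^n disjunctions of n facts, and no disjunction subsumes another. -/
import Mathlib


variable {F : Type*} [DecidableEq F]

/-- M is a model of the disjunctive database D: it meets every disjunction. -/
def IsModel (D : Finset (Finset F)) (M : Finset F) : Prop :=
  ∀ d ∈ D, ∃ t ∈ d, t ∈ M

/-- M is a minimal model of D. -/
def IsMinModel (D : Finset (Finset F)) (M : Finset F) : Prop :=
  IsModel D M ∧ ∀ M' ⊂ M, ¬ IsModel D M'

/-- reduction removes every disjunction properly containing another disjunction of D. -/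
def reduction (D : Finset (Finset F)) : Finset (Finset F) :=
  D.filter (fun d => ∀ d' ∈ D, ¬ d' ⊂ d)

/-- S is conflict-free w.r.t. a binary conflict relation G. -/
def ConflictFree (G : F → F → Prop) (S : Finset F) : Prop :=
  ∀ a ∈ S, ∀ b ∈ S, ¬ G a b

/-- S is a repair of V w.r.t. conflict relation G: a maximal conflict-free subset of V. -/
def IsRepairC (V : Finset F) (G : F → F → Prop) (S : Finset F) : Prop :=
  S ⊆ V ∧ ConflictFree G S ∧ ∀ S', S ⊂ S' → S' ⊆ V → ¬ ConflictFree G S'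

/-- Conflict relation of the family D_n: facts are (i,k) with k=0,1,2 encoding
    t_{i1}, t_{i2}, t_{i3}. Edges: {t_{i1},t_{j1}} for i≠j, {t_{i1},t_{i2}}, {t_{i2},t_{i3}}. -/
def ConfDn (n : ℕ) (a b : Fin n × Fin 3) : Prop :=
  (a.2 = 0 ∧ b.2 = 0 ∧ a.1 ≠ b.1) ∨
  (a.1 = b.1 ∧ ((a.2 = 0 ∧ b.2 = 1) ∨ (a.2 = 1 ∧ b.2 = 0) ∨
                (a.2 = 1 ∧ b.2 = 2) ∨ (a.2 = 2 ∧ b.2 = 1)))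

/-- The repair {t_{12},...,t_{n2}}. -/
def repA (n : ℕ) : Finset (Fin n × Fin 3) :=
  Finset.univ.image (fun i => (i, (1 : Fin 3)))

/-- The repair {t_{i1}, t_{i3}} ∪ { (j, f j) : j ≠ i } (for f choosing among t_{j2}, t_{j3}). -/
def repB (n : ℕ) (i : Fin n) (f : Fin n → Fin 3) : Finset (Fin n × Fin 3) :=
  insert (i, (0 : Fin 3)) (insert (i, (2 : Fin 3))
    ((Finset.univ.erase i).image (fun j => (j, f j))))

/-- The disjunctions t_{i2} ∨ t_{i3}. -/
def DnD1 (n : ℕ) : Finset (Finset (Fin n × Fin 3)) :=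
  Finset.univ.image (fun i : Fin n => ({(i, (1 : Fin 3)), (i, (2 : Fin 3))} : Finset (Fin n × Fin 3)))

/-- The disjunctions t_{i1} ∨ t_{i2} ∨ ⋁_{z ≠ i} t_z with t_z ∈ {t_{z1}, t_{z3}}. -/
def DnD2 (n : ℕ) : Finset (Finset (Fin n × Fin 3)) :=
  Finset.univ.image (fun p : Fin n × (Fin n → Bool) =>
    insert (p.1, (0 : Fin 3)) (insert (p.1, (1 : Fin 3))
      ((Finset.univ.erase p.1).image
        (fun z => (z, if p.2 z then (0 : Fin 3) else (2 : Fin 3))))))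

/-- The disjunctions t_1 ∨ ... ∨ t_n with t_i ∈ {t_{i1}, t_{i3}}. -/
def DnD3 (n : ℕ) : Finset (Finset (Fin n × Fin 3)) :=
  Finset.univ.image (fun g : Fin n → Bool =>
    Finset.univ.image (fun i : Fin n => (i, if g i then (0 : Fin 3) else (2 : Fin 3))))

lemma card_DnD1 (n : ℕ) : (DnD1 n).card = n := by
  rw [DnD1, Finset.card_image_of_injective _ ?_, Finset.card_univ, Fintype.card_fin]
  intro a b h
  have h1 := Finset.ext_iff.1 h (a, (1:Fin 3))
  simp [Prod.ext_iff] at h1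
  exact h1

lemma card_mem_DnD1 {n : ℕ} {d : Finset (Fin n × Fin 3)} (hd : d ∈ DnD1 n) : d.card = 2 := by
  simp only [DnD1, Finset.mem_image, Finset.mem_univ, true_and] at hd
  obtain ⟨i, rfl⟩ := hd
  rw [Finset.card_pair (by simp)]

lemma card_DnD3 (n : ℕ) : (DnD3 n).card = 2 ^ n := by
  rw [DnD3, Finset.card_image_of_injective _ ?_, Finset.card_univ]
  · simp
  intro g g' h
  funext i
  have h1 := Finset.ext_iff.1 h (i, if g i then (0:Fin 3) else 2)
  simp [Prod.ext_iff] at h1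
  cases hg : g i <;> cases hg' : g' i <;> simp_all

lemma mem_DnD3_snd {n : ℕ} {d : Finset (Fin n × Fin 3)} (hd : d ∈ DnD3 n)
    {x : Fin n × Fin 3} (hx : x ∈ d) : x.2 ≠ 1 := by
  simp only [DnD3, Finset.mem_image, Finset.mem_univ, true_and] at hd
  obtain ⟨g, rfl⟩ := hd
  simp only [Finset.mem_image, Finset.mem_univ, true_and] at hx
  obtain ⟨i, hi⟩ := hx
  subst hi
  cases hg : g i <;> simp [hg]

lemma card_mem_DnD3 {n : ℕ} {d : Finset (Fin n × Fin 3)} (hd : d ∈ DnD3 n) : d.card = n := by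
  simp only [DnD3, Finset.mem_image, Finset.mem_univ, true_and] at hd
  obtain ⟨g, rfl⟩ := hd
  rw [Finset.card_image_of_injective _ ?_, Finset.card_univ, Fintype.card_fin]
  intro a b h
  exact congrArg Prod.fst h

lemma disj_DnD1_DnD3 (n : ℕ) : Disjoint (DnD1 n) (DnD3 n) := by
  rw [Finset.disjoint_left]
  intro d h1 h3
  simp only [DnD1, Finset.mem_image, Finset.mem_univ, true_and] at h1
  obtain ⟨i, rfl⟩ := h1
  exact mem_DnD3_snd h3 (show ((i, (1:Fin 3)) : Fin n × Fin 3) ∈ _ by simp) rfl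

theorem stmt17 (n : ℕ) (hn : 2 ≤ n) :
    (DnD1 n).card = n
    ∧ (∀ d ∈ DnD1 n, d.card = 2)
    ∧ (DnD3 n).card = 2 ^ n
    ∧ (∀ d ∈ DnD3 n, d.card = n)
    ∧ (∑ d ∈ DnD1 n ∪ DnD3 n, d.card) = 2 * n + n * 2 ^ n
    ∧ (∀ d ∈ DnD1 n ∪ DnD3 n, ∀ d' ∈ DnD1 n ∪ DnD3 n, ¬ d ⊂ d') := by
  refine ⟨card_DnD1 n, fun d hd => card_mem_DnD1 hd, card_DnD3 n,
    fun d hd => card_mem_DnD3 hd, ?_, ?_⟩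
  · rw [Finset.sum_union (disj_DnD1_DnD3 n),
      Finset.sum_congr rfl (fun d hd => card_mem_DnD1 hd),
      Finset.sum_congr rfl (fun d hd => card_mem_DnD3 hd),
      Finset.sum_const, Finset.sum_const, card_DnD1, card_DnD3,
      smul_eq_mul, smul_eq_mul]
    ring
  · intro d hd d' hd' hss
    rcases Finset.mem_union.1 hd with h1 | h3 <;>
      rcases Finset.mem_union.1 hd' with h1' | h3'
    · exact absurd (Finset.card_lt_card hss)
        (by rw [card_mem_DnD1 h1, card_mem_DnD1 h1']; omega)
    · -- d ∈ DnD1, d' ∈ DnD3 : (i,1) ∈ d ⊆ d' but d' has no snd = 1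
      simp only [DnD1, Finset.mem_image, Finset.mem_univ, true_and] at h1
      obtain ⟨i, rfl⟩ := h1
      exact mem_DnD3_snd h3' (hss.subset (Finset.mem_insert_self _ _)) rfl
    · exact absurd (Finset.card_lt_card hss)
        (by rw [card_mem_DnD3 h3, card_mem_DnD1 h1']; omega)
    · exact absurd (Finset.card_lt_card hss)
        (by rw [card_mem_DnD3 h3, card_mem_DnD3 h3']; omega)
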